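/- Let W : ℤ^2 × S^1 → ℂ be a weight with no zeros, and let f : ℤ^2 → ℂ be supported in B_r ∩ ℤ^2. If P_W f(γ_z) = 0 for all z ∈ ℤ^2, then f ≡ 0, where P_W f(γ) = Σ_{y ∈ γ ∩ ℤ^2} W(y, γ̂) f(y), γ_z for z ≠ 0 is the line through z perpendicular to z, and γ_0 is a fixed line through 0 with rational direction. -/

import Mathlib

open RealInnerProductSpace

noncomputable def L (d : ℕ) (z : Fin d → ℤ) : EuclideanSpace ℝ (Fin d) := WithLp.toLp 2 (fun i => (z i : ℝ))

noncomputable def zstar (z : Fin 2 → ℤ) : EuclideanSpace ℝ (Fin 2) :=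
  ‖L 2 z‖⁻¹ • (WithLp.toLp 2 ![-(z 1 : ℝ), (z 0 : ℝ)] : EuclideanSpace ℝ (Fin 2))

lemma inner_two (a b : EuclideanSpace ℝ (Fin 2)) : ⟪a, b⟫ = a 0 * b 0 + a 1 * b 1 := by
  simp [PiLp.inner_apply, Fin.sum_univ_two, RCLike.inner_apply, mul_comm]

def nz (z : Fin 2 → ℤ) : ℤ := z 0 ^ 2 + z 1 ^ 2

lemma L_inj : Function.Injective (L 2) := by
  intro a b hab
  funext i
  have : ((a i : ℝ)) = (b i : ℝ) := congrFun (congrArg WithLp.ofLp hab) i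
  exact_mod_cast this

lemma norm_L_sq (z : Fin 2 → ℤ) : ‖L 2 z‖ ^ 2 = ((nz z : ℤ) : ℝ) := by
  rw [← real_inner_self_eq_norm_sq, inner_two]
  simp only [L, nz, WithLp.ofLp_toLp]
  push_cast
  ring

lemma zstar_apply (z : Fin 2 → ℤ) :
    zstar z 0 = ‖L 2 z‖⁻¹ * (-(z 1 : ℝ)) ∧ zstar z 1 = ‖L 2 z‖⁻¹ * (z 0 : ℝ) := by
  constructor <;> simp [zstar]

lemma L_ne_zero {z : Fin 2 → ℤ} (hz : z ≠ 0) : L 2 z ≠ 0 := by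
  intro hL
  apply hz
  have : L 2 z = L 2 0 := by
    rw [hL]; ext i; simp [L]
  exact L_inj this

lemma inner_L_zstar (z : Fin 2 → ℤ) : ⟪L 2 z, zstar z⟫ = 0 := by
  rw [inner_two]
  obtain ⟨h0, h1⟩ := zstar_apply z
  rw [h0, h1]
  simp only [L, WithLp.ofLp_toLp]
  ring

lemma norm_zstar {z : Fin 2 → ℤ} (hz : z ≠ 0) : ‖zstar z‖ ^ 2 = 1 := by
  have hn : ‖L 2 z‖ ≠ 0 := norm_ne_zero_iff.mpr (L_ne_zero hz)
  rw [← real_inner_self_eq_norm_sq, inner_two]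
  obtain ⟨h0, h1⟩ := zstar_apply z
  rw [h0, h1]
  have key : ((z 1 : ℝ))^2 + (z 0 : ℝ)^2 = ‖L 2 z‖^2 := by
    rw [norm_L_sq]; simp only [nz]; push_cast; ring
  field_simp
  nlinarith [key, sq_nonneg (‖L 2 z‖)]

lemma on_line {z : Fin 2 → ℤ} (hz : z ≠ 0) {y : Fin 2 → ℤ} {t : ℝ}
    (ht : L 2 y = L 2 z + t • zstar z) (hne : y ≠ z) : nz z < nz y := by
  have htne : t ≠ 0 := by
    intro h0
    apply hne
    apply L_inj
    rw [ht, h0, zero_smul, add_zero]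
  have hnorm : ‖L 2 y‖ ^ 2 = ‖L 2 z‖ ^ 2 + t ^ 2 := by
    rw [ht, norm_add_sq_real, inner_smul_right, inner_L_zstar, norm_smul]
    rw [mul_pow]
    rw [norm_zstar hz]
    simp [sq_abs]
  rw [norm_L_sq, norm_L_sq] at hnorm
  have : ((nz z : ℝ)) < ((nz y : ℝ)) := by
    rw [hnorm]
    nlinarith [pow_pos (abs_pos.mpr htne) 2, sq_abs t]
  exact_mod_cast this

lemma nz_nonneg (z : Fin 2 → ℤ) : 0 ≤ nz z := by unfold nz; positivity

lemma nz_eq_zero {z : Fin 2 → ℤ} (h : nz z = 0) : z = 0 := by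
  unfold nz at h
  have h0 : z 0 = 0 := by nlinarith [sq_nonneg (z 0), sq_nonneg (z 1)]
  have h1 : z 1 = 0 := by nlinarith [sq_nonneg (z 0), sq_nonneg (z 1)]
  funext i
  fin_cases i <;> simpa

theorem stmt8 (r : ℝ) (hr : 0 < r)
    (W : (Fin 2 → ℤ) → EuclideanSpace ℝ (Fin 2) → ℂ) (hW : ∀ y θ, W y θ ≠ 0)
    (f : (Fin 2 → ℤ) → ℂ) (hf : ∀ z, f z ≠ 0 → ‖L 2 z‖ ≤ r)
    (z0 : Fin 2 → ℤ) (hz0 : z0 ≠ 0)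
    (h0 : ∑' y : {y : Fin 2 → ℤ // ∃ t : ℝ, L 2 y = t • L 2 z0},
        W y (‖L 2 z0‖⁻¹ • L 2 z0) * f y = 0)
    (h : ∀ z : Fin 2 → ℤ, z ≠ 0 →
      ∑' y : {y : Fin 2 → ℤ // ∃ t : ℝ, L 2 y = L 2 z + t • zstar z},
        W y (zstar z) * f y = 0) :
    ∀ z, f z = 0 := by
  by_contra hcon
  push_neg at hcon
  obtain ⟨w, hw⟩ := hcon
  set S : Set (Fin 2 → ℤ) := {z | f z ≠ 0} with hS
  -- finiteness
  have hSfin : S.Finite := by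
    have hsub : S ⊆ Set.pi Set.univ (fun _ : Fin 2 => Set.Icc (-⌈r^2⌉) ⌈r^2⌉) := by
      intro z hzS i _
      have hle : ‖L 2 z‖ ≤ r := hf z hzS
      have hsq : ((nz z : ℝ)) ≤ r^2 := by
        rw [← norm_L_sq]
        exact pow_le_pow_left₀ (norm_nonneg _) hle 2
      have h1 : nz z ≤ ⌈r^2⌉ := by
        have := Int.le_ceil (r^2)
        exact_mod_cast Int.cast_le.mp (le_trans (by exact_mod_cast hsq) this)
      have h2 : (z i)^2 ≤ nz z := by
        unfold nz
        fin_cases i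
        · show z 0 ^ 2 ≤ _; nlinarith [sq_nonneg (z 1)]
        · show z 1 ^ 2 ≤ _; nlinarith [sq_nonneg (z 0)]
      have h3 : |z i| ≤ nz z := le_trans (by nlinarith [abs_nonneg (z i), sq_abs (z i)]) h2
      have := le_trans h3 h1
      simp only [Set.mem_Icc]
      constructor
      · linarith [abs_nonneg (z i), neg_abs_le (z i)]
      · linarith [le_abs_self (z i)]
    exact Set.Finite.subset (Set.Finite.pi (fun _ => Set.finite_Icc _ _)) hsub
  obtain ⟨z, hzS, hmax⟩ := Set.Finite.exists_maximalFor nz S hSfin ⟨w, hw⟩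
  by_cases hzz : z = 0
  · -- z = 0 is max, so S ⊆ {0}
    subst hzz
    have hSsub : ∀ b, f b ≠ 0 → b = 0 := by
      intro b hb
      have hnz0 : nz (0 : Fin 2 → ℤ) = 0 := by simp [nz]
      have := hmax hb (by rw [hnz0]; exact nz_nonneg b)
      exact nz_eq_zero (by have := nz_nonneg b; omega)
    have hmem : ∃ t : ℝ, L 2 (0 : Fin 2 → ℤ) = t • L 2 z0 := by
      exact ⟨0, by rw [zero_smul]; ext i; simp [L]⟩
    have := tsum_eq_single (L := SummationFilter.unconditional _) (f := fun y : {y : Fin 2 → ℤ // ∃ t : ℝ, L 2 y = t • L 2 z0} =>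
        W y (‖L 2 z0‖⁻¹ • L 2 z0) * f y) ⟨(0 : Fin 2 → ℤ), hmem⟩ ?_
    · rw [this] at h0
      rcases mul_eq_zero.mp h0 with h' | h'
      · exact hW _ _ h'
      · exact hzS h'
    · intro b hb
      have : f b.val = 0 := by
        by_contra hfb
        exact hb (Subtype.ext (hSsub b.val hfb))
      simp [this]
  · -- z ≠ 0
    have hmem : ∃ t : ℝ, L 2 z = L 2 z + t • zstar z := ⟨0, by rw [zero_smul, add_zero]⟩
    have := tsum_eq_single (L := SummationFilter.unconditional _) (f := fun y : {y : Fin 2 → ℤ // ∃ t : ℝ, L 2 y = L 2 z + t • zstar z} =>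
        W y (zstar z) * f y) ⟨z, hmem⟩ ?_
    · have h' := h z hzz
      rw [this] at h'
      rcases mul_eq_zero.mp h' with h'' | h''
      · exact hW _ _ h''
      · exact hzS h''
    · intro b hb
      have hbne : b.val ≠ z := fun he => hb (Subtype.ext he)
      obtain ⟨t, ht⟩ := b.property
      have hlt : nz z < nz b.val := on_line hzz ht hbne
      have : f b.val = 0 := by
        by_contra hfb
        have := hmax hfb (le_of_lt hlt)
        omega
      simp [this]
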